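/- Let A₀ be a symmetric positive definite n×n real matrix. Then there exists a constant c > 0 such that for all ξ ∈ W^{1,2}(ℝ, ℝⁿ), one has ‖ξ‖_{W^{1,2}} ≤ c ‖∂ₛξ + A₀ξ‖_{L²}. -/

import Mathlib

open MeasureTheory Set Filter intervalIntegral
open scoped ENNReal

lemma l2_mul_integrable {f g : ℝ → ℝ} (hf : MemLp f 2 (volume : Measure ℝ))
    (hg : MemLp g 2 volume) : Integrable (fun x => f x * g x) volume := by
  have h : (1 : ℝ≥0∞) / 1 = 1 / 2 + 1 / 2 := by rw [ENNReal.div_add_div_same, one_div_one, one_add_one_eq_two]; exact (ENNReal.div_self two_ne_zero ENNReal.ofNat_ne_top).symm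
  have := hg.smul hf (r := 1) (hpqr := ⟨by rw [inv_one, ENNReal.inv_two_add_inv_two]⟩)
  rw [memLp_one_iff_integrable] at this
  exact this

lemma l2_intervalIntegrable {E : Type*} [NormedAddCommGroup E] {f : ℝ → E}
    (hf : MemLp f 2 (volume : Measure ℝ)) (a b : ℝ) :
    IntervalIntegrable f volume a b := by
  rw [intervalIntegrable_iff]
  have : IsFiniteMeasure (volume.restrict (Set.uIoc a b)) := by
    constructor
    rw [Measure.restrict_apply_univ]
    exact measure_Ioc_lt_top
  exact (hf.restrict _).integrable one_le_two

lemma primitive_fubini {v w : ℝ → ℝ}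
    (hv : MemLp v 2 (volume : Measure ℝ)) (hw : MemLp w 2 volume)
    {a b : ℝ} (hab : a ≤ b) :
    (∫ s in a..b, v s * ∫ r in a..s, w r) + (∫ s in a..b, w s * ∫ r in a..s, v r)
      = (∫ s in a..b, v s) * (∫ s in a..b, w s) := by
  set μ : Measure ℝ := volume.restrict (Ioc a b) with hμ
  have hfin : IsFiniteMeasure μ := by
    constructor; rw [Measure.restrict_apply_univ]; exact measure_Ioc_lt_top
  have hvI : Integrable v μ := (hv.restrict _).integrable one_le_two
  have hwI : Integrable w μ := (hw.restrict _).integrable one_le_two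
  set W : ℝ → ℝ := fun s => ∫ r in a..s, w r with hW
  set V : ℝ → ℝ := fun s => ∫ r in a..s, v r with hV
  have hWc : Continuous W := continuous_primitive (fun c d => l2_intervalIntegrable hw c d) a
  have hVc : Continuous V := continuous_primitive (fun c d => l2_intervalIntegrable hv c d) a
  -- bounds on Icc a b
  obtain ⟨Cw, hCw⟩ := (isCompact_Icc (a := a) (b := b)).exists_bound_of_continuousOn
    hWc.continuousOn
  have hWbd : ∀ᵐ s ∂μ, ‖W s‖ ≤ Cw := by
    rw [hμ, ae_restrict_iff' measurableSet_Ioc]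
    exact Eventually.of_forall fun s hs => hCw s ⟨hs.1.le, hs.2⟩
  -- D and F
  have hD : MeasurableSet {p : ℝ × ℝ | p.2 ≤ p.1} := measurableSet_le measurable_snd measurable_fst
  set F : ℝ × ℝ → ℝ := ({p : ℝ × ℝ | p.2 ≤ p.1}).indicator (fun p => w p.1 * v p.2) with hF
  have hFint : Integrable F (μ.prod μ) := (hwI.mul_prod hvI).indicator hD
  have key1 : ∀ s ∈ Ioc a b, w s * V s = ∫ r, F (s, r) ∂μ := by
    intro s hs
    have : ∀ r : ℝ, F (s, r) = w s * (Iic s).indicator v r := by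
      intro r
      by_cases h : r ≤ s <;> simp [hF, Set.indicator_apply, h]
    simp_rw [this]
    rw [MeasureTheory.integral_const_mul]
    congr 1
    rw [hμ, setIntegral_indicator measurableSet_Iic, Set.Ioc_inter_Iic,
      min_eq_right hs.2, hV]
    show (∫ r in a..s, v r) = ∫ x in Ioc a s, v x
    exact integral_of_le hs.1.le
  have key2 : ∀ r ∈ Ioc a b, (∫ s, F (s, r) ∂μ) = v r * ((∫ s in a..b, w s) - W r) := by
    intro r hr
    have : ∀ s : ℝ, F (s, r) = v r * (Ici r).indicator w s := by
      intro s
      by_cases h : r ≤ s <;> simp [hF, Set.indicator_apply, h, mul_comm]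
    simp_rw [this]
    rw [MeasureTheory.integral_const_mul]
    congr 1
    rw [hμ, setIntegral_indicator measurableSet_Ici]
    have hset : Ioc a b ∩ Ici r = Icc r b := by
      ext t
      simp only [Set.mem_inter_iff, Set.mem_Ioc, Set.mem_Ici, Set.mem_Icc]
      constructor
      · rintro ⟨⟨_, h2⟩, h3⟩; exact ⟨h3, h2⟩
      · rintro ⟨h1, h2⟩; exact ⟨⟨lt_of_lt_of_le hr.1 h1, h2⟩, h1⟩
    rw [hset, integral_Icc_eq_integral_Ioc]
    have hadd : W r + ∫ t in r..b, w t = ∫ t in a..b, w t :=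
      integral_add_adjacent_intervals (l2_intervalIntegrable hw a r) (l2_intervalIntegrable hw r b)
    rw [← integral_of_le hr.2]
    linarith [hadd]
  -- integrability of the two pieces
  have h1 : Integrable (fun s => v s * W s) μ := by
    have := hvI.bdd_mul (c := Cw) hWc.aestronglyMeasurable.restrict hWbd
    simpa [mul_comm] using this
  have h2 : Integrable (fun s => v s * ((∫ t in a..b, w t) - W s)) μ := by
    have hcont : Continuous (fun s => (∫ t in a..b, w t) - W s) := continuous_const.sub hWc
    have hbd : ∀ᵐ s ∂μ, ‖(∫ t in a..b, w t) - W s‖ ≤ ‖∫ t in a..b, w t‖ + Cw := by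
      filter_upwards [hWbd] with s hs
      calc ‖(∫ t in a..b, w t) - W s‖ ≤ ‖∫ t in a..b, w t‖ + ‖W s‖ := norm_sub_le _ _
        _ ≤ ‖∫ t in a..b, w t‖ + Cw := by linarith
    have := hvI.bdd_mul hcont.aestronglyMeasurable.restrict hbd
    simpa [mul_comm] using this
  -- main computation
  have T1 : (∫ s in a..b, v s * W s) = ∫ s, v s * W s ∂μ := integral_of_le hab
  have T2 : (∫ s in a..b, w s * V s) = ∫ s, v s * ((∫ t in a..b, w t) - W s) ∂μ := by
    rw [integral_of_le hab, hμ]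
    have e1 : (∫ s in Ioc a b, w s * V s) = ∫ s in Ioc a b, ∫ r, F (s, r) ∂μ := by
      refine setIntegral_congr_fun measurableSet_Ioc fun s hs => key1 s hs
    rw [e1]
    have swap : (∫ s, ∫ r, F (s, r) ∂μ ∂μ) = ∫ r, ∫ s, F (s, r) ∂μ ∂μ :=
      integral_integral_swap (f := fun s r => F (s, r)) hFint
    rw [show (∫ s in Ioc a b, ∫ r, F (s, r) ∂μ) = ∫ s, ∫ r, F (s, r) ∂μ ∂μ from rfl, swap]
    refine setIntegral_congr_fun measurableSet_Ioc fun r hr => key2 r hr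
  rw [T1, T2, ← integral_add h1 h2]
  have : ∀ s, v s * W s + v s * ((∫ t in a..b, w t) - W s) = v s * ∫ t in a..b, w t := by
    intro s; ring
  simp_rw [this]
  rw [MeasureTheory.integral_mul_const]
  congr 1
  exact (integral_of_le hab).symm

lemma primitive_prod_expand {v w : ℝ → ℝ}
    (hv : MemLp v 2 (volume : Measure ℝ)) (hw : MemLp w 2 volume)
    (cv cw : ℝ) {a b : ℝ} (hab : a ≤ b) :
    (∫ s in a..b, (v s * (cw + ∫ r in a..s, w r) + w s * (cv + ∫ r in a..s, v r)))
      = (cv + ∫ s in a..b, v s) * (cw + ∫ s in a..b, w s) - cv * cw := by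
  set W : ℝ → ℝ := fun s => ∫ r in a..s, w r with hW
  set V : ℝ → ℝ := fun s => ∫ r in a..s, v r with hV
  have hWc : Continuous W := continuous_primitive (fun c d => l2_intervalIntegrable hw c d) a
  have hVc : Continuous V := continuous_primitive (fun c d => l2_intervalIntegrable hv c d) a
  have ivw : IntervalIntegrable (fun s => v s * W s) volume a b :=
    (l2_intervalIntegrable hv a b).mul_continuousOn hWc.continuousOn
  have iwv : IntervalIntegrable (fun s => w s * V s) volume a b :=
    (l2_intervalIntegrable hw a b).mul_continuousOn hVc.continuousOn
  have ivc : IntervalIntegrable (fun s => v s * cw) volume a b :=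
    (l2_intervalIntegrable hv a b).mul_const _
  have iwc : IntervalIntegrable (fun s => w s * cv) volume a b :=
    (l2_intervalIntegrable hw a b).mul_const _
  have expand : ∀ s, v s * (cw + W s) + w s * (cv + V s)
      = (v s * cw + w s * cv) + (v s * W s + w s * V s) := fun s => by ring
  rw [intervalIntegral.integral_congr (g :=
      fun s => (v s * cw + w s * cv) + (v s * W s + w s * V s)) (fun s _ => expand s)]
  rw [intervalIntegral.integral_add (ivc.add iwc) (ivw.add iwv),
    intervalIntegral.integral_add ivc iwc, intervalIntegral.integral_add ivw iwv,
    intervalIntegral.integral_mul_const, intervalIntegral.integral_mul_const]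
  have eq1 : (∫ x in a..b, v x * W x) + ∫ x in a..b, w x * V x
      = (∫ s in a..b, v s) * ∫ s in a..b, w s := primitive_fubini hv hw hab
  rw [eq1]
  ring

-- component Memℒp
lemma memlp_comp_proj {n : ℕ} {f : ℝ → Fin n → ℝ} (hf : MemLp f 2 (volume : Measure ℝ))
    (i : Fin n) : MemLp (fun s => f s i) 2 volume := by
  have := (ContinuousLinearMap.proj (R := ℝ) (φ := fun _ : Fin n => ℝ) i).comp_memLp' hf
  exact this

lemma interval_apply {n : ℕ} {f : ℝ → Fin n → ℝ} (hf : MemLp f 2 (volume : Measure ℝ))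
    (a b : ℝ) (i : Fin n) : (∫ s in a..b, f s) i = ∫ s in a..b, f s i := by
  have := (ContinuousLinearMap.proj (R := ℝ) (φ := fun _ : Fin n => ℝ) i).intervalIntegral_comp_comm
    (l2_intervalIntegrable hf a b)
  exact this.symm

-- FTC for the quadratic form
set_option maxHeartbeats 1000000 in
lemma ftc_quadratic {n : ℕ} {A₀ : Matrix (Fin n) (Fin n) ℝ} {ξ ξ' : ℝ → Fin n → ℝ}
    (hξ : MemLp ξ 2 (volume : Measure ℝ)) (hξ' : MemLp ξ' 2 volume)
    (hrep : ∀ t i, ξ t i = ξ 0 i + ∫ s in (0:ℝ)..t, ξ' s i)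
    (hsym : ∀ i j, A₀ j i = A₀ i j)
    {a b : ℝ} (hab : a ≤ b) :
    (∫ s in a..b, ∑ i, ∑ j, A₀ i j * (ξ' s i * ξ s j + ξ' s j * ξ s i))
      = (∑ i, ∑ j, A₀ i j * (ξ b i * ξ b j)) - ∑ i, ∑ j, A₀ i j * (ξ a i * ξ a j) := by
  have hxi : ∀ i, MemLp (fun s => ξ s i) 2 (volume : Measure ℝ) := memlp_comp_proj hξ
  have hdi : ∀ i, MemLp (fun s => ξ' s i) 2 (volume : Measure ℝ) := memlp_comp_proj hξ'
  have hxc : ∀ i, Continuous (fun t => ξ t i) := by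
    intro i
    have : Continuous (fun t => ξ 0 i + ∫ s in (0:ℝ)..t, ξ' s i) :=
      continuous_const.add (continuous_primitive (fun c d => l2_intervalIntegrable (hdi i) c d) 0)
    exact this.congr fun t => (hrep t i).symm
  -- rep relative to a
  have hrepa : ∀ t i, ξ t i = ξ a i + ∫ s in a..t, ξ' s i := by
    intro t i
    have h1 := hrep t i
    have h2 := hrep a i
    have h3 : (∫ s in (0:ℝ)..a, ξ' s i) + ∫ s in a..t, ξ' s i = ∫ s in (0:ℝ)..t, ξ' s i :=
      intervalIntegral.integral_add_adjacent_intervals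
        (l2_intervalIntegrable (hdi i) 0 a) (l2_intervalIntegrable (hdi i) a t)
    rw [h1, h2]; linarith
  have hint : ∀ i j : Fin n, IntervalIntegrable
      (fun s => A₀ i j * (ξ' s i * ξ s j + ξ' s j * ξ s i)) volume a b := by
    intro i j
    refine (IntervalIntegrable.add ?_ ?_).const_mul _
    · exact (l2_intervalIntegrable (hdi i) a b).mul_continuousOn (hxc j).continuousOn
    · exact (l2_intervalIntegrable (hdi j) a b).mul_continuousOn (hxc i).continuousOn
  have step1 : (∫ s in a..b, ∑ i, ∑ j, A₀ i j * (ξ' s i * ξ s j + ξ' s j * ξ s i))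
      = ∑ i, ∑ j, ∫ s in a..b, A₀ i j * (ξ' s i * ξ s j + ξ' s j * ξ s i) := by
    have h1 := intervalIntegral.integral_finset_sum (a := a) (b := b) (μ := volume)
      (s := Finset.univ) (f := fun i s => ∑ j, A₀ i j * (ξ' s i * ξ s j + ξ' s j * ξ s i))
      (fun i _ => by
        have hs := IntervalIntegrable.sum (μ := volume) (a := a) (b := b)
          (f := fun j s => A₀ i j * (ξ' s i * ξ s j + ξ' s j * ξ s i))
          Finset.univ (fun j _ => hint i j)
        rw [Finset.sum_fn] at hs
        exact hs)
    have h2 : ∀ i : Fin n, (∫ s in a..b, ∑ j, A₀ i j * (ξ' s i * ξ s j + ξ' s j * ξ s i))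
        = ∑ j, ∫ s in a..b, A₀ i j * (ξ' s i * ξ s j + ξ' s j * ξ s i) :=
      fun i => intervalIntegral.integral_finset_sum (fun j _ => hint i j)
    rw [h1]
    exact Finset.sum_congr rfl fun i _ => h2 i
  rw [step1]
  have term : ∀ i j, (∫ s in a..b, A₀ i j * (ξ' s i * ξ s j + ξ' s j * ξ s i))
      = A₀ i j * (ξ b i * ξ b j - ξ a i * ξ a j) := by
    intro i j
    rw [intervalIntegral.integral_const_mul]
    congr 1
    have hcong : ∀ s, ξ' s i * ξ s j + ξ' s j * ξ s i
        = ξ' s i * (ξ a j + ∫ r in a..s, ξ' r j) + ξ' s j * (ξ a i + ∫ r in a..s, ξ' r i) := by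
      intro s; rw [← hrepa s j, ← hrepa s i]
    rw [intervalIntegral.integral_congr (fun s _ => hcong s)]
    rw [primitive_prod_expand (hdi i) (hdi j) (ξ a i) (ξ a j) hab]
    rw [← hrepa b i, ← hrepa b j]
  simp_rw [term]
  simp [mul_sub, Finset.sum_sub_distrib]


set_option maxHeartbeats 1000000 in
lemma cross_zero {n : ℕ} {A₀ : Matrix (Fin n) (Fin n) ℝ} {ξ ξ' : ℝ → Fin n → ℝ}
    (hξ : MemLp ξ 2 (volume : Measure ℝ)) (hξ' : MemLp ξ' 2 volume)
    (hrep : ∀ t i, ξ t i = ξ 0 i + ∫ s in (0:ℝ)..t, ξ' s i)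
    (hsym : ∀ i j, A₀ j i = A₀ i j)
    (hpos : ∀ x : Fin n → ℝ, 0 ≤ ∑ i, ∑ j, A₀ i j * (x i * x j)) :
    (∫ s : ℝ, ∑ i, ∑ j, A₀ i j * (ξ' s i * ξ s j)) = 0 := by
  have hxi : ∀ i, MemLp (fun s => ξ s i) 2 (volume : Measure ℝ) := memlp_comp_proj hξ
  have hdi : ∀ i, MemLp (fun s => ξ' s i) 2 (volume : Measure ℝ) := memlp_comp_proj hξ'
  set G : ℝ → ℝ := fun s => ∑ i, ∑ j, A₀ i j * (ξ' s i * ξ s j + ξ' s j * ξ s i) with hG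
  set f : ℝ → ℝ := fun t => ∑ i, ∑ j, A₀ i j * (ξ t i * ξ t j) with hf
  have hGint : Integrable G volume := by
    refine integrable_finset_sum _ fun i _ => integrable_finset_sum _ fun j _ => ?_
    exact ((l2_mul_integrable (hdi i) (hxi j)).add (l2_mul_integrable (hdi j) (hxi i))).const_mul _
  have hfint : Integrable f volume := by
    refine integrable_finset_sum _ fun i _ => integrable_finset_sum _ fun j _ => ?_
    exact (l2_mul_integrable (hxi i) (hxi j)).const_mul _
  have hfneg : Integrable (fun t => f (-t)) volume := hfint.comp_neg
  have hf0 : ∀ t, 0 ≤ f t := fun t => hpos (ξ t)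
  have hT : ∀ k : ℕ, ∃ Tk : ℝ, (k : ℝ) < Tk ∧ f Tk + f (-Tk) < 1 / (k + 1) := by
    intro k
    by_contra hcon
    push_neg at hcon
    have hint2 : Integrable (fun t => f t + f (-t)) (volume.restrict (Ioi (k : ℝ))) :=
      (hfint.add hfneg).restrict
    have hbound : ∀ᵐ t ∂(volume.restrict (Ioi (k : ℝ))), 1 / ((k : ℝ) + 1) ≤ f t + f (-t) := by
      rw [ae_restrict_iff' measurableSet_Ioi]
      exact Eventually.of_forall fun t ht => hcon t ht
    have hconst : Integrable (fun _ : ℝ => 1 / ((k : ℝ) + 1)) (volume.restrict (Ioi (k : ℝ))) := by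
      refine Integrable.mono' hint2 aestronglyMeasurable_const ?_
      filter_upwards [hbound] with t ht
      rw [Real.norm_eq_abs, abs_of_nonneg (by positivity)]
      exact ht
    rw [integrable_const_iff] at hconst
    rcases hconst with h | h
    · have h2 : (0 : ℝ) < 1 / ((k : ℝ) + 1) := by positivity
      rw [h] at h2; exact lt_irrefl _ h2
    · rw [isFiniteMeasure_restrict, Real.volume_Ioi] at h
      exact h rfl
  choose T hT1 hT2 using hT
  have hTtop : Filter.Tendsto T Filter.atTop Filter.atTop :=
    tendsto_atTop_mono (fun k => (hT1 k).le) tendsto_natCast_atTop_atTop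
  have hTbot : Filter.Tendsto (fun k => -(T k)) Filter.atTop Filter.atBot :=
    Filter.tendsto_neg_atBot_iff.mpr hTtop
  have hvals : ∀ k, (∫ s in (-(T k))..(T k), G s) = f (T k) - f (-(T k)) := by
    intro k
    have hk0 : (0 : ℝ) ≤ (k : ℝ) := Nat.cast_nonneg k
    have hTk : -(T k) ≤ T k := by nlinarith [hT1 k]
    exact ftc_quadratic hξ hξ' hrep hsym hTk
  have hlim1 : Filter.Tendsto (fun k => ∫ s in (-(T k))..(T k), G s) Filter.atTop
      (nhds (∫ s, G s)) := intervalIntegral_tendsto_integral hGint hTbot hTtop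
  have hlim2 : Filter.Tendsto (fun k => ∫ s in (-(T k))..(T k), G s) Filter.atTop (nhds 0) := by
    simp_rw [hvals]
    apply squeeze_zero_norm (fun k => ?_) tendsto_one_div_add_atTop_nhds_zero_nat
    have h1 := hf0 (T k); have h2 := hf0 (-(T k)); have h3 := (hT2 k).le
    rw [Real.norm_eq_abs, abs_le]
    constructor <;> linarith
  have hG0 : (∫ s, G s) = 0 := tendsto_nhds_unique hlim1 hlim2
  have hGg : ∀ s, G s = 2 * ∑ i, ∑ j, A₀ i j * (ξ' s i * ξ s j) := by
    intro s
    rw [hG]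
    have e1 : ∑ i, ∑ j, A₀ i j * (ξ' s i * ξ s j + ξ' s j * ξ s i)
        = (∑ i, ∑ j, A₀ i j * (ξ' s i * ξ s j)) + ∑ i, ∑ j, A₀ i j * (ξ' s j * ξ s i) := by
      rw [← Finset.sum_add_distrib]
      refine Finset.sum_congr rfl fun i _ => ?_
      rw [← Finset.sum_add_distrib]
      exact Finset.sum_congr rfl fun j _ => by ring
    have e2 : (∑ i, ∑ j, A₀ i j * (ξ' s j * ξ s i))
        = ∑ i, ∑ j, A₀ i j * (ξ' s i * ξ s j) := by
      rw [Finset.sum_comm]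
      refine Finset.sum_congr rfl fun x _ => Finset.sum_congr rfl fun y _ => ?_
      rw [hsym x y]
    show (∑ i, ∑ j, A₀ i j * (ξ' s i * ξ s j + ξ' s j * ξ s i))
        = 2 * ∑ i, ∑ j, A₀ i j * (ξ' s i * ξ s j)
    rw [e1, e2]; ring
  have : (∫ s, G s) = 2 * ∫ s, ∑ i, ∑ j, A₀ i j * (ξ' s i * ξ s j) := by
    simp_rw [hGg]
    exact MeasureTheory.integral_const_mul 2 _
  rw [this] at hG0
  linarith

/-- For a symmetric positive definite matrix `A₀`, the operator
`D_{A₀} ξ = ∂ₛ ξ + A₀ ξ` satisfies `‖ξ‖_{W^{1,2}} ≤ c ‖D_{A₀} ξ‖_{L²}` for all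
`ξ ∈ W^{1,2}(ℝ, ℝⁿ)` (represented by its continuous representative together with
its weak derivative `ξ'`). -/
theorem estimate_posdef_constant_coefficient
    (n : ℕ) (A₀ : Matrix (Fin n) (Fin n) ℝ) (hpos : A₀.PosDef) :
    ∃ c : ℝ, 0 < c ∧ ∀ ξ ξ' : ℝ → Fin n → ℝ,
      MemLp ξ 2 (volume : Measure ℝ) → MemLp ξ' 2 (volume : Measure ℝ) →
      (∀ t : ℝ, ξ t = ξ 0 + ∫ s in (0:ℝ)..t, ξ' s) →
      Real.sqrt ((∫ s : ℝ, ‖ξ s‖ ^ 2) + ∫ s : ℝ, ‖ξ' s‖ ^ 2) ≤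
        c * Real.sqrt (∫ s : ℝ, ‖ξ' s + A₀.mulVec (ξ s)‖ ^ 2) := by
  classical
  -- symmetry and positivity of the quadratic form
  have hsym : ∀ i j, A₀ j i = A₀ i j := fun i j => by
    have := hpos.1.apply i j
    simpa using this
  have hquad : ∀ x : Fin n → ℝ, dotProduct x (A₀.mulVec x)
      = ∑ i, ∑ j, A₀ i j * (x i * x j) := by
    intro x
    simp only [dotProduct, Matrix.mulVec, Finset.mul_sum]
    exact Finset.sum_congr rfl fun i _ => Finset.sum_congr rfl fun j _ => by ring
  have hposf : ∀ x : Fin n → ℝ, 0 ≤ ∑ i, ∑ j, A₀ i j * (x i * x j) := by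
    intro x
    have h := hpos.posSemidef.dotProduct_mulVec_nonneg x
    rw [← hquad x]
    simpa using h
  -- the coercivity constant
  obtain ⟨μ₀, hμ₀pos, hμ₀⟩ : ∃ m : ℝ, 0 < m ∧
      ∀ y : Fin n → ℝ, m * ∑ i, y i ^ 2 ≤ ∑ i, A₀.mulVec y i ^ 2 := by
    have hdet : IsUnit A₀.det := isUnit_iff_ne_zero.mpr hpos.det_pos.ne'
    set B := A₀⁻¹ with hB
    have hBA : B * A₀ = 1 := Matrix.nonsing_inv_mul A₀ hdet
    set K : ℝ := (∑ i, ∑ j, B i j ^ 2) + 1 with hK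
    have hBnn : 0 ≤ ∑ i, ∑ j, B i j ^ 2 :=
      Finset.sum_nonneg fun i _ => Finset.sum_nonneg fun j _ => sq_nonneg _
    have hKpos : 0 < K := by rw [hK]; linarith
    refine ⟨K⁻¹, inv_pos.mpr hKpos, ?_⟩
    intro y
    have hid : B.mulVec (A₀.mulVec y) = y := by
      rw [Matrix.mulVec_mulVec, hBA, Matrix.one_mulVec]
    set z := A₀.mulVec y with hz
    have hz0 : 0 ≤ ∑ j, z j ^ 2 := Finset.sum_nonneg fun j _ => sq_nonneg _
    have hbound : ∑ i, y i ^ 2 ≤ K * ∑ i, z i ^ 2 := by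
      have h1 : ∀ i, y i ^ 2 ≤ (∑ j, B i j ^ 2) * ∑ j, z j ^ 2 := by
        intro i
        have hyi : y i = ∑ j, B i j * z j := by
          conv_lhs => rw [← hid]
          simp [Matrix.mulVec, dotProduct]
        rw [hyi]
        exact Finset.sum_mul_sq_le_sq_mul_sq _ _ _
      calc ∑ i, y i ^ 2 ≤ ∑ i : Fin n, (∑ j, B i j ^ 2) * ∑ j, z j ^ 2 :=
            Finset.sum_le_sum fun i _ => h1 i
        _ = (∑ i, ∑ j, B i j ^ 2) * ∑ j, z j ^ 2 := by rw [Finset.sum_mul]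
        _ ≤ K * ∑ j, z j ^ 2 := by
            rw [hK]; nlinarith [hz0, hBnn]
    calc K⁻¹ * ∑ i, y i ^ 2 ≤ K⁻¹ * (K * ∑ i, z i ^ 2) :=
          mul_le_mul_of_nonneg_left hbound (inv_nonneg.mpr hKpos.le)
      _ = ∑ i, z i ^ 2 := by rw [← mul_assoc, inv_mul_cancel₀ hKpos.ne', one_mul]
  set M : ℝ := max (1 / μ₀) 1 with hM
  have hM0 : 0 < M := lt_of_lt_of_le one_pos (le_max_right _ _)
  have hMn1 : 0 < M * (n : ℝ) + 1 :=
    add_pos_of_nonneg_of_pos (mul_nonneg hM0.le (Nat.cast_nonneg n)) one_pos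
  refine ⟨Real.sqrt (M * (n : ℝ) + 1), Real.sqrt_pos.mpr hMn1, ?_⟩
  intro ξ ξ' hξ hξ' hrepvec
  -- componentwise representation
  have hrep : ∀ t i, ξ t i = ξ 0 i + ∫ s in (0:ℝ)..t, ξ' s i := by
    intro t i
    have h := congrFun (hrepvec t) i
    rw [Pi.add_apply] at h
    rw [h, interval_apply hξ' 0 t i]
  -- membership facts
  have hxi : ∀ i, MemLp (fun s => ξ s i) 2 (volume : Measure ℝ) := memlp_comp_proj hξ
  have hdi : ∀ i, MemLp (fun s => ξ' s i) 2 (volume : Measure ℝ) := memlp_comp_proj hξ'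
  have hAξ : MemLp (fun s => A₀.mulVec (ξ s)) 2 (volume : Measure ℝ) := by
    have h := (LinearMap.toContinuousLinearMap (Matrix.mulVecLin A₀)).comp_memLp' hξ
    have heq : ⇑(LinearMap.toContinuousLinearMap (Matrix.mulVecLin A₀)) ∘ ξ
        = fun s => A₀.mulVec (ξ s) := funext fun s => by
      simp [LinearMap.coe_toContinuousLinearMap', Matrix.mulVecLin_apply]
    rwa [heq] at h
  have hAxi : ∀ i, MemLp (fun s => A₀.mulVec (ξ s) i) 2 (volume : Measure ℝ) :=
    memlp_comp_proj hAξ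
  have hηmem : MemLp (fun s => ξ' s + A₀.mulVec (ξ s)) 2 (volume : Measure ℝ) := by
    have := hξ'.add hAξ
    exact this
  -- integrability of squares
  have sq_int : ∀ {f : ℝ → ℝ}, MemLp f 2 (volume : Measure ℝ) →
      Integrable (fun s => f s ^ 2) volume := by
    intro f hf
    exact (l2_mul_integrable hf hf).congr
      (Eventually.of_forall fun x => (pow_two (f x)).symm)
  have iEξ : Integrable (fun s => ∑ i, ξ s i ^ 2) volume :=
    integrable_finset_sum _ fun i _ => sq_int (hxi i)
  have iEξ' : Integrable (fun s => ∑ i, ξ' s i ^ 2) volume :=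
    integrable_finset_sum _ fun i _ => sq_int (hdi i)
  have iEAξ : Integrable (fun s => ∑ i, A₀.mulVec (ξ s) i ^ 2) volume :=
    integrable_finset_sum _ fun i _ => sq_int (hAxi i)
  have ig : Integrable (fun s => ∑ i, ∑ j, A₀ i j * (ξ' s i * ξ s j)) volume :=
    integrable_finset_sum _ fun i _ => integrable_finset_sum _ fun j _ =>
      (l2_mul_integrable (hdi i) (hxi j)).const_mul _
  have hnξ : Integrable (fun s => ‖ξ s‖ ^ 2) volume := sq_int hξ.norm
  have hnξ' : Integrable (fun s => ‖ξ' s‖ ^ 2) volume := sq_int hξ'.norm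
  have hnη : Integrable (fun s => ‖ξ' s + A₀.mulVec (ξ s)‖ ^ 2) volume := sq_int hηmem.norm
  -- cross term vanishes
  have hcross : (∫ s : ℝ, ∑ i, ∑ j, A₀ i j * (ξ' s i * ξ s j)) = 0 :=
    cross_zero hξ hξ' hrep hsym hposf
  -- pointwise expansion of the square
  have hmid : ∀ s, (∑ i, ξ' s i * A₀.mulVec (ξ s) i)
      = ∑ i, ∑ j, A₀ i j * (ξ' s i * ξ s j) := by
    intro s
    simp only [Matrix.mulVec, dotProduct, Finset.mul_sum]
    exact Finset.sum_congr rfl fun i _ => Finset.sum_congr rfl fun j _ => by ring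
  have hdec : ∀ s, (∑ i, (ξ' s i + A₀.mulVec (ξ s) i) ^ 2)
      = ((∑ i, ξ' s i ^ 2) + 2 * ∑ i, ∑ j, A₀ i j * (ξ' s i * ξ s j))
        + ∑ i, A₀.mulVec (ξ s) i ^ 2 := by
    intro s
    have h1 : ∀ i : Fin n, (ξ' s i + A₀.mulVec (ξ s) i) ^ 2
        = (ξ' s i ^ 2 + 2 * (ξ' s i * A₀.mulVec (ξ s) i)) + A₀.mulVec (ξ s) i ^ 2 :=
      fun i => by ring
    rw [Finset.sum_congr rfl fun i _ => h1 i, Finset.sum_add_distrib, Finset.sum_add_distrib,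
      ← Finset.mul_sum, hmid s]
  -- the integral identity
  have iMid : Integrable (fun s => (∑ i, ξ' s i ^ 2)
      + 2 * ∑ i, ∑ j, A₀ i j * (ξ' s i * ξ s j)) volume := iEξ'.add (ig.const_mul 2)
  have hEη : (∫ s, ∑ i, (ξ' s i + A₀.mulVec (ξ s) i) ^ 2)
      = (∫ s, ∑ i, ξ' s i ^ 2) + ∫ s, ∑ i, A₀.mulVec (ξ s) i ^ 2 := by
    rw [integral_congr_ae (Eventually.of_forall hdec), integral_add iMid iEAξ,
      integral_add iEξ' (ig.const_mul 2), MeasureTheory.integral_const_mul, hcross]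
    ring
  -- integrability of the eta sum
  have iEη : Integrable (fun s => ∑ i, (ξ' s i + A₀.mulVec (ξ s) i) ^ 2) volume := by
    refine integrable_finset_sum _ fun i _ => sq_int ?_
    exact (hdi i).add (hAxi i)
  -- norm comparison
  have hcmp1 : ∀ y : Fin n → ℝ, ‖y‖ ^ 2 ≤ ∑ i, y i ^ 2 := by
    intro y
    have hS : 0 ≤ ∑ i, y i ^ 2 := Finset.sum_nonneg fun i _ => sq_nonneg _
    have h : ‖y‖ ≤ Real.sqrt (∑ i, y i ^ 2) := by
      rw [pi_norm_le_iff_of_nonneg (Real.sqrt_nonneg _)]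
      intro i
      rw [Real.norm_eq_abs, ← Real.sqrt_sq_eq_abs (y i)]
      exact Real.sqrt_le_sqrt (Finset.single_le_sum (fun j _ => sq_nonneg (y j))
        (Finset.mem_univ i))
    calc ‖y‖ ^ 2 ≤ Real.sqrt (∑ i, y i ^ 2) ^ 2 :=
          pow_le_pow_left₀ (norm_nonneg _) h 2
      _ = ∑ i, y i ^ 2 := Real.sq_sqrt hS
  have hcmp2 : ∀ y : Fin n → ℝ, (∑ i, y i ^ 2) ≤ (n : ℝ) * ‖y‖ ^ 2 := by
    intro y
    calc (∑ i, y i ^ 2) ≤ ∑ _i : Fin n, ‖y‖ ^ 2 := by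
          refine Finset.sum_le_sum fun i _ => ?_
          rw [← sq_abs (y i)]
          exact pow_le_pow_left₀ (abs_nonneg _) (norm_le_pi_norm y i) 2
      _ = (n : ℝ) * ‖y‖ ^ 2 := by
          rw [Finset.sum_const, Finset.card_univ, Fintype.card_fin, nsmul_eq_mul]
  -- putting numbers together
  set Eξv := ∫ s, ∑ i, ξ s i ^ 2 with hEξv
  set Eξ'v := ∫ s, ∑ i, ξ' s i ^ 2 with hEξ'v
  set EAξv := ∫ s, ∑ i, A₀.mulVec (ξ s) i ^ 2 with hEAξv
  set Iη := ∫ s : ℝ, ‖ξ' s + A₀.mulVec (ξ s)‖ ^ 2 with hIη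
  have hIη0 : 0 ≤ Iη := integral_nonneg fun s => sq_nonneg _
  have hEξ'0 : 0 ≤ Eξ'v := integral_nonneg fun s => Finset.sum_nonneg fun i _ => sq_nonneg _
  have hEAξ0 : 0 ≤ EAξv := integral_nonneg fun s => Finset.sum_nonneg fun i _ => sq_nonneg _
  have A1 : (∫ s : ℝ, ‖ξ s‖ ^ 2) ≤ Eξv :=
    integral_mono hnξ iEξ fun s => hcmp1 (ξ s)
  have A2 : (∫ s : ℝ, ‖ξ' s‖ ^ 2) ≤ Eξ'v :=
    integral_mono hnξ' iEξ' fun s => hcmp1 (ξ' s)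
  have A3 : μ₀ * Eξv ≤ EAξv := by
    rw [hEξv, ← MeasureTheory.integral_const_mul]
    exact integral_mono (iEξ.const_mul μ₀) iEAξ fun s => hμ₀ (ξ s)
  have A5 : (∫ s, ∑ i, (ξ' s i + A₀.mulVec (ξ s) i) ^ 2) ≤ (n : ℝ) * Iη := by
    rw [hIη, ← MeasureTheory.integral_const_mul]
    refine integral_mono iEη (hnη.const_mul _) fun s => ?_
    have := hcmp2 (ξ' s + A₀.mulVec (ξ s))
    simpa using this
  have hEξ : Eξv ≤ M * EAξv := by
    have h2 : (1 / μ₀) * (μ₀ * Eξv) ≤ (1 / μ₀) * EAξv :=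
      mul_le_mul_of_nonneg_left A3 (by positivity)
    have h3 : (1 / μ₀) * EAξv ≤ M * EAξv :=
      mul_le_mul_of_nonneg_right (le_max_left _ _) hEAξ0
    have h4 : (1 / μ₀) * (μ₀ * Eξv) = Eξv := by field_simp
    linarith
  have hfin : (∫ s : ℝ, ‖ξ s‖ ^ 2) + (∫ s : ℝ, ‖ξ' s‖ ^ 2) ≤ (M * (n : ℝ) + 1) * Iη := by
    have hA4 : (∫ s, ∑ i, (ξ' s i + A₀.mulVec (ξ s) i) ^ 2) = Eξ'v + EAξv := hEη
    have h5 : M * (Eξ'v + EAξv) ≤ M * ((n : ℝ) * Iη) := by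
      apply mul_le_mul_of_nonneg_left _ hM0.le
      rw [← hA4]; exact A5
    have h6 : Eξ'v ≤ M * Eξ'v := le_mul_of_one_le_left hEξ'0 (le_max_right _ _)
    nlinarith [hIη0]
  calc Real.sqrt ((∫ s : ℝ, ‖ξ s‖ ^ 2) + ∫ s : ℝ, ‖ξ' s‖ ^ 2)
      ≤ Real.sqrt ((M * (n : ℝ) + 1) * Iη) := Real.sqrt_le_sqrt hfin
    _ = Real.sqrt (M * (n : ℝ) + 1) * Real.sqrt Iη := Real.sqrt_mul hMn1.le _
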